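/- Let X be a finite metric space with card X = n+1, n ≥ 1. Then X embeds isometrically in E^n if and only if Sch(x_0, x_1, ..., x_k) ≥ 0 for every (x_0,...,x_k) ∈ X^{k+1} and every k = 1,...,n. -/

import Mathlib

open Matrix Finset

section Aux

variable {n : Type*} [Fintype n] [DecidableEq n]

lemma det_ite_single (M : Matrix n n ℝ) (s : Finset n) :
    (Matrix.of fun i => if i ∈ s then (Pi.single i 1 : n → ℝ) else M i).det
      = (M.submatrix (Subtype.val : {x : n // x ∉ s} → n) Subtype.val).det := by
  set N : Matrix n n ℝ := Matrix.of fun i => if i ∈ s then (Pi.single i 1 : n → ℝ) else M i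
  have hsub : N.submatrix (Equiv.sumCompl (· ∈ s)) (Equiv.sumCompl (· ∈ s)) =
      Matrix.fromBlocks 1 0
        (M.submatrix (Subtype.val : {x : n // x ∉ s} → n) (Subtype.val : {x : n // x ∈ s} → n))
        (M.submatrix (Subtype.val : {x : n // x ∉ s} → n) Subtype.val) := by
    ext i j
    rcases i with i | i <;> rcases j with j | j <;>
      rcases i with ⟨i, hi⟩ <;> rcases j with ⟨j, hj⟩ <;>
      simp [N, Matrix.submatrix_apply, hi, hj, Matrix.one_apply, Pi.single_apply,
        Subtype.ext_iff, eq_comm]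
    · rintro rfl; exact hj hi
  calc N.det = (N.submatrix (Equiv.sumCompl (· ∈ s)) (Equiv.sumCompl (· ∈ s))).det :=
        (Matrix.det_submatrix_equiv_self _ _).symm
    _ = _ := by rw [hsub, Matrix.det_fromBlocks_zero₁₂]; simp

lemma det_add_smul_one (M : Matrix n n ℝ) (t : ℝ) :
    (M + t • (1 : Matrix n n ℝ)).det
      = ∑ s : Finset n, t ^ s.card *
          (M.submatrix (Subtype.val : {x : n // x ∉ s} → n) Subtype.val).det := by
  have hrows : (M + t • (1 : Matrix n n ℝ)) =
      Matrix.of ((fun i => t • (Pi.single i 1 : n → ℝ)) + (fun i => M i)) := by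
    ext i j
    by_cases hij : i = j <;>
      simp [hij, Matrix.one_apply, Pi.single_apply, add_comm]
  rw [hrows]
  have hexp := (Matrix.detRowAlternating : (n → ℝ) [⋀^n]→ₗ[ℝ] ℝ).toMultilinearMap.map_add_univ
      (fun i => t • (Pi.single i 1 : n → ℝ)) (fun i => M i)
  rw [AlternatingMap.coe_multilinearMap] at hexp
  have hdet : (Matrix.of ((fun i => t • (Pi.single i 1 : n → ℝ)) + (fun i => M i))).det
      = (Matrix.detRowAlternating : (n → ℝ) [⋀^n]→ₗ[ℝ] ℝ)
          ((fun i => t • (Pi.single i 1 : n → ℝ)) + (fun i => M i)) := rfl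
  rw [hdet, hexp]
  refine Finset.sum_congr rfl fun s _ => ?_
  set m : n → n → ℝ := s.piecewise (fun i => (Pi.single i 1 : n → ℝ)) (fun i => M i) with hm
  have hpw : s.piecewise (fun i => t • (Pi.single i 1 : n → ℝ)) (fun i => M i)
      = s.piecewise (fun i => (fun _ : n => t) i • m i) m := by
    ext i j
    by_cases hi : i ∈ s <;>
      simp [hi, hm, Finset.piecewise_eq_of_mem, Finset.piecewise_eq_of_notMem]
  have hsm := (Matrix.detRowAlternating :
      (n → ℝ) [⋀^n]→ₗ[ℝ] ℝ).toMultilinearMap.map_piecewise_smul (fun _ : n => t) m s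
  rw [AlternatingMap.coe_multilinearMap] at hsm
  rw [hpw, hsm]
  have hmdet : (Matrix.detRowAlternating : (n → ℝ) [⋀^n]→ₗ[ℝ] ℝ) m
      = (Matrix.of fun i => if i ∈ s then (Pi.single i 1 : n → ℝ) else M i).det := by
    congr 1
  rw [hmdet, det_ite_single M s]
  simp [mul_comm]

lemma posSemidef_of_minors {M : Matrix n n ℝ} (hM : M.IsHermitian)
    (h : ∀ s : Finset n,
      0 ≤ (M.submatrix (Subtype.val : {x : n // x ∉ s} → n) Subtype.val).det) :
    M.PosSemidef := by
  refine hM.posSemidef_iff_eigenvalues_nonneg.mpr fun i => ?_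
  by_contra hneg
  push_neg at hneg
  set t : ℝ := -hM.eigenvalues i with htdef
  have ht : 0 < t := by rw [htdef]; linarith [show (0 : n → ℝ) i = 0 from rfl]
  have hdet0 : (M + t • (1 : Matrix n n ℝ)).det = 0 := by
    rw [← Matrix.exists_mulVec_eq_zero_iff]
    refine ⟨⇑(hM.eigenvectorBasis i), ?_, ?_⟩
    · intro hz
      exact hM.eigenvectorBasis.orthonormal.ne_zero i (by ext a; exact congrFun hz a)
    · rw [Matrix.add_mulVec, hM.mulVec_eigenvectorBasis, Matrix.smul_mulVec,
        Matrix.one_mulVec, htdef]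
      ext a
      simp
  have hpos : 0 < (M + t • (1 : Matrix n n ℝ)).det := by
    rw [det_add_smul_one M t]
    refine Finset.sum_pos' (fun s _ => mul_nonneg (pow_nonneg ht.le _) (h s)) ?_
    refine ⟨Finset.univ, Finset.mem_univ _, ?_⟩
    haveI : IsEmpty {x : n // x ∉ (Finset.univ : Finset n)} :=
      ⟨fun x => x.2 (Finset.mem_univ _)⟩
    rw [Matrix.det_isEmpty]
    simpa using pow_pos ht _
  rw [hdet0] at hpos
  exact lt_irrefl _ hpos

open scoped MatrixOrder in
lemma exists_gram {m : ℕ} {M : Matrix (Fin m) (Fin m) ℝ} (hM : M.PosSemidef) :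
    ∃ v : Fin m → EuclideanSpace ℝ (Fin m), ∀ i j, (inner ℝ (v i) (v j) : ℝ) = M i j := by
  obtain ⟨B, rfl⟩ := CStarAlgebra.nonneg_iff_eq_star_mul_self.mp hM.nonneg
  refine ⟨fun i => (WithLp.toLp 2 (fun a => B a i) : EuclideanSpace ℝ (Fin m)), fun i j => ?_⟩
  simp [Matrix.mul_apply, PiLp.inner_apply, RCLike.inner_apply, Matrix.conjTranspose_apply, Matrix.star_eq_conjTranspose, mul_comm]

end Aux

lemma PosSemidef.det_nonneg' {n : Type*} [Fintype n] [DecidableEq n] {M : Matrix n n ℝ}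
    (hM : M.PosSemidef) : 0 ≤ M.det := by
  rw [hM.isHermitian.det_eq_prod_eigenvalues]
  exact Finset.prod_nonneg fun i _ => hM.eigenvalues_nonneg i

lemma gram_det_nonneg {k n : ℕ} (w : Fin k → EuclideanSpace ℝ (Fin n)) :
    0 ≤ (Matrix.of fun i j : Fin k => 2 * (inner ℝ (w i) (w j) : ℝ)).det := by
  set A : Matrix (Fin n) (Fin k) ℝ := Matrix.of fun a i => w i a with hA
  have hG : (Matrix.of fun i j : Fin k => 2 * (inner ℝ (w i) (w j) : ℝ))
      = (2 : ℝ) • (Aᴴ * A) := by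
    ext i j
    simp [hA, Matrix.mul_apply, PiLp.inner_apply, RCLike.inner_apply, Finset.mul_sum,
      mul_comm]
  rw [hG, Matrix.det_smul]
  exact mul_nonneg (by positivity) (PosSemidef.det_nonneg'
    (Matrix.posSemidef_conjTranspose_mul_self A))

lemma sq_cancel {a b : ℝ} (ha : 0 ≤ a) (hb : 0 ≤ b) (h : a ^ 2 = b ^ 2) : a = b :=
  le_antisymm (by nlinarith) (by nlinarith)

/-- The Schoenberg determinant of `k+1` points of a metric space. -/
def schDet {X : Type*} [PseudoMetricSpace X] (k : ℕ) (x : Fin (k + 1) → X) : ℝ :=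
  Matrix.det (Matrix.of fun i j : Fin k =>
    dist (x 0) (x i.succ) ^ 2 + dist (x 0) (x j.succ) ^ 2 -
      dist (x i.succ) (x j.succ) ^ 2)

theorem stmt13 {X : Type*} [MetricSpace X] [Fintype X] (n : ℕ) (hn : 1 ≤ n)
    (hcard : Fintype.card X = n + 1) :
    (∃ f : X → EuclideanSpace ℝ (Fin n), Isometry f) ↔
      (∀ k : ℕ, 1 ≤ k → k ≤ n → ∀ x : Fin (k + 1) → X, 0 ≤ schDet k x) := by
  constructor
  · rintro ⟨f, hf⟩ k _ _ x
    have key : ∀ i j : Fin k,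
        dist (x 0) (x i.succ) ^ 2 + dist (x 0) (x j.succ) ^ 2 -
            dist (x i.succ) (x j.succ) ^ 2
          = 2 * (inner ℝ (f (x i.succ) - f (x 0)) (f (x j.succ) - f (x 0)) : ℝ) := by
      intro i j
      rw [← hf.dist_eq (x 0) (x i.succ), ← hf.dist_eq (x 0) (x j.succ),
        ← hf.dist_eq (x i.succ) (x j.succ)]
      simp only [dist_eq_norm]
      set u : EuclideanSpace ℝ (Fin n) := f (x i.succ) - f (x 0) with hu
      set w : EuclideanSpace ℝ (Fin n) := f (x j.succ) - f (x 0) with hw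
      have h1 : ‖f (x 0) - f (x i.succ)‖ = ‖u‖ := by rw [hu]; exact (norm_sub_rev _ _).symm
      have h2 : ‖f (x 0) - f (x j.succ)‖ = ‖w‖ := by rw [hw]; exact (norm_sub_rev _ _).symm
      have h3 : ‖f (x i.succ) - f (x j.succ)‖ = ‖u - w‖ := by rw [hu, hw]; congr 1; abel
      clear_value u w
      rw [h1, h2, h3, norm_sub_sq_real u w]
      ring
    have hre : schDet k x = (Matrix.of fun i j : Fin k =>
        2 * (inner ℝ (f (x i.succ) - f (x 0)) (f (x j.succ) - f (x 0)) : ℝ)).det := by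
      unfold schDet
      congr 1
      ext i j
      exact key i j
    rw [hre]
    exact gram_det_nonneg _
  · intro h
    set e := (Fintype.equivFinOfCardEq hcard).symm with he
    set M : Matrix (Fin n) (Fin n) ℝ := Matrix.of fun i j =>
      (dist (e 0) (e i.succ) ^ 2 + dist (e 0) (e j.succ) ^ 2 -
        dist (e i.succ) (e j.succ) ^ 2) / 2 with hMdef
    have hMapp : ∀ i j, M i j = (dist (e 0) (e i.succ) ^ 2 + dist (e 0) (e j.succ) ^ 2 -
        dist (e i.succ) (e j.succ) ^ 2) / 2 := fun i j => rfl
    have hHerm : M.IsHermitian := by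
      ext i j
      simp only [Matrix.conjTranspose_apply, hMapp, star_trivial]
      rw [dist_comm (e i.succ) (e j.succ)]
      ring
    have hminor : ∀ s : Finset (Fin n),
        0 ≤ (M.submatrix (Subtype.val : {x : Fin n // x ∉ s} → Fin n) Subtype.val).det := by
      intro s
      set k := Fintype.card {x : Fin n // x ∉ s} with hk
      rcases Nat.eq_zero_or_pos k with hk0 | hkpos
      · haveI : IsEmpty {x : Fin n // x ∉ s} := Fintype.card_eq_zero_iff.mp hk0
        rw [Matrix.det_isEmpty]
        norm_num
      · set g : Fin k ≃ {x : Fin n // x ∉ s} := (Fintype.equivFin _).symm with hg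
        have hkn : k ≤ n :=
          le_trans (Fintype.card_subtype_le _) (le_of_eq (Fintype.card_fin n))
        set x : Fin (k + 1) → X :=
          fun i => Fin.cases (e 0) (fun a => e (Fin.succ ((g a : Fin n)))) i with hx
        have hsch := h k hkpos hkn x
        have hmat : (Matrix.of fun i j : Fin k =>
            dist (x 0) (x i.succ) ^ 2 + dist (x 0) (x j.succ) ^ 2 -
              dist (x i.succ) (x j.succ) ^ 2)
            = (2 : ℝ) • ((M.submatrix (Subtype.val : {x : Fin n // x ∉ s} → Fin n)
                Subtype.val).submatrix g g) := by
          ext i j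
          simp only [Matrix.of_apply, Matrix.smul_apply, Matrix.submatrix_apply, hMapp,
            hx, Fin.cases_zero, Fin.cases_succ, smul_eq_mul]
          ring
        rw [schDet, hmat, Matrix.det_smul] at hsch
        rw [← Matrix.det_submatrix_equiv_self g]
        have h2k : (0 : ℝ) < 2 ^ Fintype.card (Fin k) := by positivity
        exact nonneg_of_mul_nonneg_right hsch h2k
    have hpsd : M.PosSemidef := posSemidef_of_minors hHerm hminor
    obtain ⟨v, hv⟩ := exists_gram hpsd
    refine ⟨fun p => Fin.cases 0 v (e.symm p), Isometry.of_dist_eq fun p q => ?_⟩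
    obtain ⟨i, rfl⟩ := e.surjective p
    obtain ⟨j, rfl⟩ := e.surjective q
    rw [Equiv.symm_apply_apply, Equiv.symm_apply_apply]
    have hnormsq : ∀ a b : Fin n, dist (v a) (v b) ^ 2
        = M a a - 2 * M a b + M b b := by
      intro a b
      rw [dist_eq_norm, norm_sub_sq_real, ← real_inner_self_eq_norm_sq,
        ← real_inner_self_eq_norm_sq, hv, hv, hv]
    have hzero : ∀ b : Fin n, dist (0 : EuclideanSpace ℝ (Fin n)) (v b) ^ 2 = M b b := by
      intro b
      rw [dist_comm, dist_eq_norm, sub_zero, ← real_inner_self_eq_norm_sq, hv b b]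
    rcases Fin.eq_zero_or_eq_succ i with rfl | ⟨a, rfl⟩ <;>
      rcases Fin.eq_zero_or_eq_succ j with rfl | ⟨b, rfl⟩
    · simp
    · simp only [Fin.cases_zero, Fin.cases_succ]
      refine sq_cancel dist_nonneg dist_nonneg ?_
      rw [hzero b, hMapp]
      simp
    · simp only [Fin.cases_zero, Fin.cases_succ]
      refine sq_cancel dist_nonneg dist_nonneg ?_
      rw [dist_comm, hzero a, hMapp, dist_comm (e a.succ) (e 0)]
      simp
    · simp only [Fin.cases_succ]
      refine sq_cancel dist_nonneg dist_nonneg ?_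
      rw [hnormsq a b, hMapp, hMapp, hMapp]
      simp
      ring
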